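/- Let R be a PDCF Γ-graded k-algebra with graded maximal ideal R_+ and M a BDF Γ-graded R-module. Then there exists a BDF family (x_i | i ∈ I) of homogeneous elements of M which generates M as an R-module and whose residues modulo R_+M form a k-basis of M/R_+M; in particular, (x_i | i ∈ I) is a minimal R-spanning family of M (no proper subfamily generates M). -/

import Mathlib

open scoped DirectSum

section Defs
variable {Γ : Type*} [AddCommGroup Γ]

/-- The relation `g ≤_Q h`: there exists `q ∈ Q` with `g + q = h`. -/
def leQ (Q : Set Γ) (g h : Γ) : Prop := ∃ q ∈ Q, g + q = h

/-- `U` is downward finite w.r.t. `≤_Q`. -/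
def DownwardFinite (Q U : Set Γ) : Prop := ∀ g : Γ, {u ∈ U | leQ Q u g}.Finite

/-- `U` is finitely bounded below w.r.t. `≤_Q`. -/
def FinBddBelow (Q U : Set Γ) : Prop := ∃ T : Finset Γ, ∀ u ∈ U, ∃ t ∈ T, leQ Q t u

/-- A submonoid (as a set) is pointed. -/
def IsPointed (Q : Set Γ) : Prop := ∀ p ∈ Q, ∀ q ∈ Q, p + q = 0 → p = 0 ∧ q = 0

/-- A family of elements of `Γ` is a BDF family. -/
def BDFFamily (Q : Set Γ) {I : Type*} (g : I → Γ) : Prop :=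
  DownwardFinite Q (Set.range g) ∧ FinBddBelow Q (Set.range g) ∧
    ∀ γ : Γ, {i : I | g i = γ}.Finite

end Defs

/-- The Γ-support of a graded object. -/
def suppOf {Γ k V : Type*} [Semiring k] [AddCommMonoid V] [Module k V]
    (ℱ : Γ → Submodule k V) : Set Γ := {g | ℱ g ≠ ⊥}

/-- The graded maximal ideal `R₊ = ⊕_{q >_Q 0} R_q`. -/
def gradedIrrelevant {k Γ R : Type*} [Field k] [AddCommGroup Γ]
    [CommRing R] [Algebra k R] (𝒜 : Γ → Submodule k R) : Ideal R :=
  Ideal.span (⋃ g ∈ {g : Γ | g ∈ suppOf 𝒜 ∧ g ≠ 0}, (𝒜 g : Set R))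

set_option maxHeartbeats 2000000

/-- every BDF `Γ`-graded module `M` over a PDCF `Γ`-graded `k`-algebra `R`
admits a BDF family of homogeneous elements generating `M` over `R`, whose residues form
a `k`-basis of `M/R₊M`; in particular it is a minimal `R`-spanning family. -/
theorem exists_minimal_R_spanning_family
    {k Γ R M : Type*} [Field k] [AddCommGroup Γ] [DecidableEq Γ]
    [CommRing R] [IsDomain R] [Algebra k R]
    (𝒜 : Γ → Submodule k R) [GradedAlgebra 𝒜]
    [AddCommGroup M] [Module R M] [Module k M] [IsScalarTower k R M]
    (ℳ : Γ → Submodule k M) [DirectSum.Decomposition ℳ] [SetLike.GradedSMul 𝒜 ℳ]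
    -- `R` is PDCF
    (hconn : 𝒜 0 = (1 : Submodule k R))
    (hfd : ∀ g : Γ, FiniteDimensional k (𝒜 g))
    (hpointed : IsPointed (suppOf 𝒜))
    (hdfQ : DownwardFinite (suppOf 𝒜) (suppOf 𝒜))
    -- `M` is BDF
    (hMb : FinBddBelow (suppOf 𝒜) (suppOf ℳ))
    (hMd : DownwardFinite (suppOf 𝒜) (suppOf ℳ))
    (hMf : ∀ g : Γ, FiniteDimensional k (ℳ g)) :
    ∃ (s : Set M) (d : s → Γ),
      -- each element is a nonzero homogeneous element of degree `d`
      (∀ m : s, (m : M) ≠ 0 ∧ (m : M) ∈ ℳ (d m)) ∧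
      -- `(x_i)` is a BDF family
      BDFFamily (suppOf 𝒜) d ∧
      -- it generates `M` over `R`
      Submodule.span R s = ⊤ ∧
      -- the residues form a `k`-basis of `M/R₊M`
      LinearIndependent k (fun m : s =>
        (Submodule.Quotient.mk (m : M) :
          M ⧸ (gradedIrrelevant 𝒜 • (⊤ : Submodule R M)))) ∧
      Submodule.span k (Set.range fun m : s =>
        (Submodule.Quotient.mk (m : M) :
          M ⧸ (gradedIrrelevant 𝒜 • (⊤ : Submodule R M)))) = ⊤ ∧
      -- minimality: no proper subfamily generates `M` over `R`
      (∀ t : Set M, t ⊂ s → Submodule.span R t ≠ ⊤) := by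
  classical
  -- `Q = suppOf 𝒜` is closed under addition
  have hQadd : ∀ p ∈ suppOf 𝒜, ∀ q ∈ suppOf 𝒜, p + q ∈ suppOf 𝒜 := by
    intro p hp q hq
    obtain ⟨a, ha, ha0⟩ := (Submodule.ne_bot_iff _).mp hp
    obtain ⟨b, hb, hb0⟩ := (Submodule.ne_bot_iff _).mp hq
    intro hbot
    have hab : a * b ∈ 𝒜 (p + q) := SetLike.mul_mem_graded ha hb
    rw [hbot, Submodule.mem_bot] at hab
    exact mul_ne_zero ha0 hb0 hab
  have hmemQ : ∀ (q : Γ) (r : R), r ∈ 𝒜 q → r ≠ 0 → q ∈ suppOf 𝒜 := by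
    intro q r hr hr0 hbot
    rw [hbot, Submodule.mem_bot] at hr
    exact hr0 hr
  have hmemsupp : ∀ (g : Γ) (x : M), x ∈ ℳ g → x ≠ 0 → g ∈ suppOf ℳ := by
    intro g x hx hx0 hbot
    rw [hbot, Submodule.mem_bot] at hx
    exact hx0 hx
  -- the measure used for well-founded induction
  have hSfin : ∀ g : Γ, {u ∈ suppOf ℳ | ∃ q ∈ suppOf 𝒜, q ≠ 0 ∧ u + q = g}.Finite := by
    intro g
    refine (hMd g).subset ?_
    rintro u ⟨h1, q, hq, _, e⟩
    exact ⟨h1, q, hq, e⟩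
  set μ : Γ → ℕ := fun g => (hSfin g).toFinset.card with hμdef
  have hμ : ∀ h g, h ∈ suppOf ℳ → (∃ q ∈ suppOf 𝒜, q ≠ 0 ∧ h + q = g) → μ h < μ g := by
    intro h g hh hlt
    apply Finset.card_lt_card
    rw [Set.Finite.toFinset_ssubset_toFinset]
    constructor
    · rintro u ⟨hu, q1, hq1, hq1n, e1⟩
      obtain ⟨q2, hq2, hq2n, e2⟩ := hlt
      refine ⟨hu, q1 + q2, hQadd _ hq1 _ hq2, ?_, by rw [← add_assoc, e1, e2]⟩
      intro h0
      exact hq1n (hpointed _ hq1 _ hq2 h0).1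
    · intro hsub
      obtain ⟨_, q, _, hqn, e⟩ := hsub ⟨hh, hlt⟩
      exact hqn (by exact add_eq_left.mp e)
  -- the degree-`γ` projection, as a `k`-linear map
  have hπdef : ∀ γ : Γ, ∃ π : M →ₗ[k] M, ∀ x : M, π x = ((DirectSum.decompose ℳ x) γ : M) := by
    intro γ
    refine ⟨{ toFun := fun x => ((DirectSum.decompose ℳ x) γ : M)
              map_add' := fun x y => by
                show ((DirectSum.decompose ℳ (x + y)) γ : M)
                  = ((DirectSum.decompose ℳ x) γ : M) + ((DirectSum.decompose ℳ y) γ : M)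
                rw [DirectSum.decompose_add, DirectSum.add_apply, Submodule.coe_add]
              map_smul' := fun c x => by
                show ((DirectSum.decompose ℳ (c • x)) γ : M)
                  = c • ((DirectSum.decompose ℳ x) γ : M)
                rw [DirectSum.decompose_smul, DirectSum.smul_apply,
                  SetLike.val_smul] }, fun x => rfl⟩
  choose π hπ using hπdef
  have hπ_same : ∀ γ (x : M), x ∈ ℳ γ → π γ x = x := by
    intro γ x hx; rw [hπ]; exact DirectSum.decompose_of_mem_same ℳ hx
  have hπ_ne : ∀ (γ h : Γ) (x : M), x ∈ ℳ h → h ≠ γ → π γ x = 0 := by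
    intro γ h x hx hne; rw [hπ]; exact DirectSum.decompose_of_mem_ne ℳ hx hne
  -- the graded pieces of `R₊M`
  set gen : Γ → Set M :=
    fun g => {m | ∃ q : Γ, q ≠ 0 ∧ ∃ r ∈ 𝒜 q, ∃ x ∈ ℳ (g - q), m = r • x} with hgendef
  set N : Γ → Submodule k M := fun g => Submodule.span k (gen g) with hNdef
  have hNM : ∀ g, ∀ y ∈ N g, y ∈ ℳ g := by
    intro g y hy
    refine Submodule.span_induction ?_ ?_ ?_ ?_ hy
    · rintro m ⟨q, hq0, r, hr, x, hx, rfl⟩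
      have h1 := SetLike.GradedSMul.smul_mem hr hx
      have e : q +ᵥ (g - q) = g := by rw [vadd_eq_add]; abel
      rwa [e] at h1
    · exact (ℳ g).zero_mem
    · intro a b _ _ ha hb; exact (ℳ g).add_mem ha hb
    · intro c a _ ha; exact (ℳ g).smul_mem c ha
  set P : Submodule k M := ⨆ g, N g with hPdef
  have hNP : ∀ g, N g ≤ P := fun g => le_iSup N g
  have hπP : ∀ γ, ∀ x ∈ P, π γ x ∈ N γ := by
    intro γ x hx
    have h1 : Submodule.map (π γ) P ≤ N γ := by
      rw [hPdef, Submodule.map_iSup]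
      refine iSup_le fun g => ?_
      rintro _ ⟨y, hy, rfl⟩
      by_cases hgγ : g = γ
      · rw [hπ_same γ y (hgγ ▸ hNM g y hy)]
        exact hgγ ▸ hy
      · rw [hπ_ne γ g y (hNM g y hy) hgγ]
        exact (N γ).zero_mem
    exact h1 ⟨x, hx, rfl⟩
  -- scalar commutation
  have hsc : ∀ (c : k) (a : R) (x : M), a • (c • x) = c • (a • x) := by
    intro c a x
    rw [← algebraMap_smul R c x, ← algebraMap_smul R c (a • x), ← mul_smul, ← mul_smul,
      mul_comm]
  -- stability of the pieces under homogeneous multiplication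
  have hstabHom : ∀ (p : Γ) (a : R), a ∈ 𝒜 p → ∀ g, ∀ y ∈ N g, a • y ∈ N (p + g) := by
    intro p a ha g y hy
    refine Submodule.span_induction (p := fun y _ => a • y ∈ N (p + g)) ?_ ?_ ?_ ?_ hy
    · rintro _ ⟨q, hq0, r, hr, x, hx, rfl⟩
      by_cases hz : a * r = 0
      · rw [← mul_smul, hz, zero_smul]; exact (N (p + g)).zero_mem
      · have ha0 : a ≠ 0 := fun h => hz (by rw [h, zero_mul])
        have hr0 : r ≠ 0 := fun h => hz (by rw [h, mul_zero])
        have hpq0 : p + q ≠ 0 := by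
          intro h0
          exact hq0 (hpointed _ (hmemQ p a ha ha0) _ (hmemQ q r hr hr0) h0).2
        refine Submodule.subset_span ⟨p + q, hpq0, a * r, SetLike.mul_mem_graded ha hr, x, ?_,
          by rw [mul_smul]⟩
        have e : (p + g) - (p + q) = g - q := by abel
        rwa [e]
    · show a • (0 : M) ∈ N (p + g)
      rw [smul_zero]; exact (N (p + g)).zero_mem
    · intro x y _ _ hx hy
      show a • (x + y) ∈ N (p + g)
      rw [smul_add]; exact (N (p + g)).add_mem hx hy
    · intro c x _ hx
      show a • (c • x) ∈ N (p + g)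
      rw [hsc]; exact (N (p + g)).smul_mem c hx
  have hstabHom' : ∀ (p : Γ) (a : R), a ∈ 𝒜 p → ∀ y ∈ P, a • y ∈ P := by
    intro p a ha y hy
    refine Submodule.iSup_induction N (motive := fun y => a • y ∈ P) hy ?_ ?_ ?_
    · intro g x hx
      exact hNP (p + g) (hstabHom p a ha g x hx)
    · show a • (0 : M) ∈ P
      rw [smul_zero]; exact P.zero_mem
    · intro x y hx hy; rw [smul_add]; exact P.add_mem hx hy
  have hstab : ∀ (r : R), ∀ y ∈ P, r • y ∈ P := by
    intro r y hy
    have h1 := DirectSum.sum_support_decompose 𝒜 r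
    rw [← h1, Finset.sum_smul]
    refine Submodule.sum_mem P ?_
    intro p _
    exact hstabHom' p _ (SetLike.coe_mem _) y hy
  -- `P` coincides with `R₊ M`
  have hNIM : ∀ g, ∀ y ∈ N g, y ∈ (gradedIrrelevant 𝒜 • (⊤ : Submodule R M)) := by
    intro g y hy
    refine Submodule.span_induction
      (p := fun y _ => y ∈ (gradedIrrelevant 𝒜 • (⊤ : Submodule R M)).restrictScalars k)
      ?_ ?_ ?_ ?_ hy
    · rintro _ ⟨q, hq0, r, hr, x, hx, rfl⟩
      by_cases hr0 : r = 0
      · rw [hr0, zero_smul]; exact Submodule.zero_mem _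
      · have hrI : r ∈ gradedIrrelevant 𝒜 :=
          Ideal.subset_span (Set.mem_biUnion ⟨hmemQ q r hr hr0, hq0⟩ hr)
        exact (Submodule.restrictScalars_mem _ _ _).mpr (Submodule.smul_mem_smul hrI Submodule.mem_top)
    · exact Submodule.zero_mem _
    · intro a b _ _ ha hb; exact Submodule.add_mem _ ha hb
    · intro c a _ ha
      rw [Submodule.restrictScalars_mem] at ha ⊢
      rw [← algebraMap_smul R c a]
      exact Submodule.smul_mem _ _ ha
  have hPIM : ∀ y ∈ P, y ∈ (gradedIrrelevant 𝒜 • (⊤ : Submodule R M)) := by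
    intro y hy
    refine Submodule.iSup_induction N
      (motive := fun y => y ∈ (gradedIrrelevant 𝒜 • (⊤ : Submodule R M))) hy ?_ ?_ ?_
    · exact fun g x hx => hNIM g x hx
    · exact Submodule.zero_mem _
    · intro x y hx hy; exact Submodule.add_mem _ hx hy
  have hIMP : ∀ y ∈ (gradedIrrelevant 𝒜 • (⊤ : Submodule R M)), y ∈ P := by
    intro y hy
    refine Submodule.smul_induction_on hy ?_ ?_
    · intro r hr m _
      refine Submodule.span_induction (p := fun r _ => r • m ∈ P) ?_ ?_ ?_ ?_ hr
      · intro a hagen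
        obtain ⟨q, hq, ha⟩ := Set.mem_iUnion₂.mp hagen
        rw [← DirectSum.sum_support_decompose ℳ m, Finset.smul_sum]
        refine Submodule.sum_mem P ?_
        intro h _
        refine hNP (q + h) (Submodule.subset_span ⟨q, hq.2, a, ha, _, ?_, rfl⟩)
        have e : (q + h) - q = h := by abel
        rw [e]; exact SetLike.coe_mem _
      · show (0 : R) • m ∈ P
        rw [zero_smul]; exact P.zero_mem
      · intro r1 r2 _ _ h1 h2
        show (r1 + r2) • m ∈ P
        rw [add_smul]; exact P.add_mem h1 h2
      · intro c r' _ h1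
        show (c • r') • m ∈ P
        rw [smul_eq_mul, mul_smul]; exact hstab c _ h1
    · intro x y hx hy; exact P.add_mem hx hy
  -- choose complements and bases in each degree
  have hcompl : ∀ g : Γ, ∃ W : Submodule k (ℳ g), IsCompl ((N g).comap (ℳ g).subtype) W :=
    fun g => Submodule.exists_isCompl _
  choose W hW using hcompl
  set B : ∀ g : Γ, Module.Basis (Module.Basis.ofVectorSpaceIndex k (W g)) k (W g) :=
    fun g => Module.Basis.ofVectorSpace k (W g) with hBdef
  set sg : Γ → Set M :=
    fun g => Set.range (fun i : Module.Basis.ofVectorSpaceIndex k (W g) => ((B g i : ℳ g) : M))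
    with hsgdef
  set s : Set M := ⋃ g, sg g with hsdef
  -- basic properties of `sg`
  have hsgmem : ∀ g, ∀ m ∈ sg g, m ∈ ℳ g ∧ m ≠ 0 ∧ m ∈ Submodule.map (ℳ g).subtype (W g) := by
    rintro g m ⟨i, rfl⟩
    refine ⟨SetLike.coe_mem _, ?_, ⟨(B g i : W g), SetLike.coe_mem _, rfl⟩⟩
    intro h0
    have h1 : (B g i : W g) = 0 := by
      apply Subtype.ext
      apply Subtype.ext
      exact h0
    exact (B g).ne_zero i h1
  have hsgfin : ∀ g, (sg g).Finite := by
    intro g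
    haveI := hMf g
    haveI := FiniteDimensional.fintypeBasisIndex (B g)
    exact Set.finite_range _
  have hsgli : ∀ g, LinearIndependent k (fun x : sg g => (x : M)) := by
    intro g
    have h1 : LinearIndependent k
        (fun i : Module.Basis.ofVectorSpaceIndex k (W g) => ((B g i : ℳ g) : M)) := by
      have h2 := (B g).linearIndependent
      have h3 := h2.map' ((ℳ g).subtype.comp (W g).subtype) ?_
      · exact h3
      · rw [LinearMap.ker_eq_bot]
        exact Subtype.val_injective.comp Subtype.val_injective
    exact h1.linearIndepOn_id
  -- the degree function
  have hds : ∀ m : s, ∃ g, (m : M) ∈ sg g := fun m => Set.mem_iUnion.mp m.2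
  set d : s → Γ := fun m => (hds m).choose with hddef
  have hd : ∀ m : s, (m : M) ∈ sg (d m) := fun m => (hds m).choose_spec
  have hdmem : ∀ m : s, (m : M) ∈ ℳ (d m) := fun m => (hsgmem _ _ (hd m)).1
  have hdne : ∀ m : s, (m : M) ≠ 0 := fun m => (hsgmem _ _ (hd m)).2.1
  -- the decomposition `ℳ g = span(sg g) ⊕ N g`, in a usable form
  have hdecomp : ∀ g (x : M), x ∈ ℳ g →
      ∃ w ∈ Submodule.map (ℳ g).subtype (W g), ∃ z ∈ N g, x = w + z := by
    intro g x hx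
    have h1 : (⟨x, hx⟩ : ℳ g) ∈ (N g).comap (ℳ g).subtype ⊔ W g := by
      rw [(hW g).sup_eq_top]; trivial
    obtain ⟨y, hy, z, hz, hyz⟩ := Submodule.mem_sup.mp h1
    refine ⟨z, ⟨z, hz, rfl⟩, y, hy, ?_⟩
    have h2 : (y : M) + (z : M) = x := by rw [← Submodule.coe_add, hyz]
    rw [← h2]
    exact add_comm _ _
  -- elements of `W g` lie in the span of `sg g`
  have hWspan : ∀ g (x : M), x ∈ Submodule.map (ℳ g).subtype (W g) →
      x ∈ Submodule.span k (sg g) := by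
    rintro g _ ⟨y, hy, rfl⟩
    have h1 : (⟨y, hy⟩ : W g) ∈ Submodule.span k (Set.range (B g)) := by
      rw [(B g).span_eq]; trivial
    have h2 := Submodule.mem_map_of_mem (f := (ℳ g).subtype.comp (W g).subtype) h1
    rw [Submodule.map_span] at h2
    convert h2 using 2
    rw [hsgdef]
    ext m
    constructor
    · rintro ⟨i, rfl⟩; exact ⟨B g i, ⟨i, rfl⟩, rfl⟩
    · rintro ⟨b, ⟨i, rfl⟩, rfl⟩; exact ⟨i, rfl⟩
    rfl
  -- generation: every homogeneous element lies in the `R`-span of `s`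
  have hsgsub : ∀ g, sg g ⊆ s := fun g => Set.subset_iUnion sg g
  have hspanHom : ∀ (n : ℕ) (g : Γ), μ g = n → ∀ x ∈ ℳ g, x ∈ Submodule.span R s := by
    intro n
    induction n using Nat.strong_induction_on with
    | _ n IH =>
      intro g hg x hx
      obtain ⟨w, hw, z, hz, hxwz⟩ := hdecomp g x hx
      have hwspan : w ∈ Submodule.span R s := by
        have h1 := hWspan g w hw
        have h2 : Submodule.span k (sg g) ≤ (Submodule.span R s).restrictScalars k := by
          rw [Submodule.span_le]
          exact fun m hm => Submodule.subset_span (hsgsub g hm)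
        exact h2 h1
      have hzspan : z ∈ Submodule.span R s := by
        refine Submodule.span_induction (p := fun z _ => z ∈ Submodule.span R s)
          ?_ ?_ ?_ ?_ hz
        · rintro _ ⟨q, hq0, r, hr, x', hx', rfl⟩
          by_cases hr0 : r = 0
          · rw [hr0, zero_smul]; exact Submodule.zero_mem _
          by_cases hx0 : x' = 0
          · rw [hx0, smul_zero]; exact Submodule.zero_mem _
          have hsupp : g - q ∈ suppOf ℳ := hmemsupp _ _ hx' hx0
          have hlt : μ (g - q) < n := by
            rw [← hg]
            exact hμ (g - q) g hsupp ⟨q, hmemQ q r hr hr0, hq0, by abel⟩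
          exact Submodule.smul_mem _ r (IH _ hlt (g - q) rfl x' hx')
        · exact Submodule.zero_mem _
        · intro a b _ _ ha hb; exact Submodule.add_mem _ ha hb
        · intro c a _ ha
          rw [← algebraMap_smul R c a]
          exact Submodule.smul_mem _ _ ha
      rw [hxwz]
      exact Submodule.add_mem _ hwspan hzspan
  have hspanTop : Submodule.span R s = ⊤ := by
    rw [eq_top_iff]
    intro m _
    rw [← DirectSum.sum_support_decompose ℳ m]
    exact Submodule.sum_mem _ fun g _ => hspanHom (μ g) g rfl _ (SetLike.coe_mem _)
  -- the quotient map, `k`-linearly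
  set IM : Submodule R M := gradedIrrelevant 𝒜 • (⊤ : Submodule R M) with hIMdef
  set mkk : M →ₗ[k] (M ⧸ IM) := (IM.mkQ).restrictScalars k with hmkkdef
  set v : s → M ⧸ IM := fun m => Submodule.Quotient.mk (m : M) with hvdef
  have hmkkv : ∀ m : s, mkk (m : M) = v m := fun m => rfl
  have hmkk0 : ∀ x : M, mkk x = 0 ↔ x ∈ IM := by
    intro x
    rw [hmkkdef]
    exact Submodule.Quotient.mk_eq_zero IM
  -- residues span the quotient
  have hresHom : ∀ (g : Γ) (x : M), x ∈ ℳ g → mkk x ∈ Submodule.span k (Set.range v) := by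
    intro g x hx
    obtain ⟨w, hw, z, hz, hxwz⟩ := hdecomp g x hx
    have h1 : mkk z = 0 := (hmkk0 z).mpr (hNIM g z hz)
    have h2 : mkk w ∈ Submodule.span k (Set.range v) := by
      have h3 := Submodule.mem_map_of_mem (f := mkk) (hWspan g w hw)
      rw [Submodule.map_span] at h3
      refine Submodule.span_mono ?_ h3
      rintro _ ⟨m', hm', rfl⟩
      exact ⟨⟨m', hsgsub g hm'⟩, rfl⟩
    rw [hxwz, map_add, h1, add_zero]
    exact h2
  have hresTop : Submodule.span k (Set.range v) = ⊤ := by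
    rw [eq_top_iff]
    intro y _
    obtain ⟨m, rfl⟩ := Submodule.Quotient.mk_surjective IM y
    have h1 : (Submodule.Quotient.mk m : M ⧸ IM) = mkk m := rfl
    rw [h1, ← DirectSum.sum_support_decompose ℳ m, map_sum]
    exact Submodule.sum_mem _ fun g _ => hresHom g _ (SetLike.coe_mem _)
  -- linear independence of the residues
  have hLI : LinearIndependent k v := by
    rw [linearIndependent_iff']
    intro t c hsum i hit
    -- the combination lies in `R₊M`, hence in `P`
    have hmemP : (∑ j ∈ t, c j • (j : M)) ∈ P := by
      refine hIMP _ ?_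
      rw [← hmkk0]
      rw [map_sum]
      simp only [map_smul]
      simp only [hmkkv]
      exact hsum
    -- project to degree `d i`
    have hproj : π (d i) (∑ j ∈ t, c j • (j : M))
        = ∑ j ∈ t.filter (fun j => d j = d i), c j • (j : M) := by
      rw [map_sum, Finset.sum_filter]
      refine Finset.sum_congr rfl fun j _ => ?_
      rw [map_smul]
      by_cases h : d j = d i
      · rw [if_pos h, hπ_same _ _ (h ▸ hdmem j)]
      · rw [if_neg h, hπ_ne _ _ _ (hdmem j) h, smul_zero]
    have hinN : (∑ j ∈ t.filter (fun j => d j = d i), c j • (j : M)) ∈ N (d i) := by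
      rw [← hproj]
      exact hπP (d i) _ hmemP
    have hinW : (∑ j ∈ t.filter (fun j => d j = d i), c j • (j : M))
        ∈ Submodule.map (ℳ (d i)).subtype (W (d i)) := by
      refine Submodule.sum_mem _ fun j hj => ?_
      have hdj : d j = d i := (Finset.mem_filter.mp hj).2
      refine Submodule.smul_mem _ _ ?_
      exact hdj ▸ (hsgmem _ _ (hd j)).2.2
    -- the complement meets `N (d i)` trivially
    have hzero : (∑ j ∈ t.filter (fun j => d j = d i), c j • (j : M)) = 0 := by
      obtain ⟨y, hy, hyeq⟩ := hinW
      rw [← hyeq] at hinN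
      have hy2 : y ∈ (N (d i)).comap (ℳ (d i)).subtype := hinN
      have hy3 : y = 0 := (Submodule.disjoint_def.mp (hW (d i)).disjoint) y hy2 hy
      rw [← hyeq, hy3, map_zero]
    -- conclude by linear independence of `sg (d i)`
    have hli := hsgli (d i)
    set f : {j : s // j ∈ t.filter (fun j => d j = d i)} → sg (d i) :=
      fun j => ⟨(j : M), by
        have hdj : d (j : s) = d i := (Finset.mem_filter.mp j.2).2
        have h7 := hd (j : s)
        rwa [hdj] at h7⟩ with hfdef
    have hfinj : Function.Injective f := by
      intro a b hab
      have h6 : ((a : s) : M) = ((b : s) : M) :=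
        congrArg (Subtype.val : sg (d i) → M) hab
      exact Subtype.ext (Subtype.ext h6)
    have hli2 := hli.comp f hfinj
    have h4 : ∀ j : {j : s // j ∈ t.filter (fun j => d j = d i)}, c (j : s) = 0 := by
      rw [Fintype.linearIndependent_iff] at hli2
      refine hli2 (fun j => c (j : s)) ?_
      have h5 : ∑ j ∈ (t.filter (fun j => d j = d i)).attach,
          c (j : s) • ((j : s) : M) = 0 := by
        rw [Finset.sum_attach (t.filter (fun j => d j = d i)) (fun j => c j • (j : M))]
        exact hzero
      rw [Finset.univ_eq_attach]
      exact h5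
    have hii : i ∈ t.filter (fun j => d j = d i) := Finset.mem_filter.mpr ⟨hit, rfl⟩
    exact h4 ⟨i, hii⟩
  -- residues of the chosen degrees: BDF family
  have hBDF : BDFFamily (suppOf 𝒜) d := by
    refine ⟨?_, ?_, ?_⟩
    · intro g
      refine (hMd g).subset ?_
      rintro u ⟨⟨m, rfl⟩, hle⟩
      exact ⟨hmemsupp _ _ (hdmem m) (hdne m), hle⟩
    · obtain ⟨T, hT⟩ := hMb
      exact ⟨T, fun u hu => by
        obtain ⟨m, rfl⟩ := hu
        exact hT _ (hmemsupp _ _ (hdmem m) (hdne m))⟩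
    · intro γ
      refine Set.Finite.subset ((hsgfin γ).preimage
        (Subtype.val_injective.injOn)) ?_
      intro m hm
      have : (m : M) ∈ sg γ := hm ▸ hd m
      exact this
  -- the connectedness decomposition of a ring element
  have hdecompI : ∀ r : R, r - ((DirectSum.decompose 𝒜 r 0 : 𝒜 0) : R) ∈ gradedIrrelevant 𝒜 := by
    intro r
    have hsum := DirectSum.sum_support_decompose 𝒜 r
    have hmemI : ∀ g ∈ (DirectSum.decompose 𝒜 r).support.erase 0,
        ((DirectSum.decompose 𝒜 r g : 𝒜 g) : R) ∈ gradedIrrelevant 𝒜 := by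
      intro g hg
      have hne : g ≠ 0 := Finset.ne_of_mem_erase hg
      have hnz : ((DirectSum.decompose 𝒜 r g : 𝒜 g) : R) ≠ 0 := by
        intro hz
        exact DFinsupp.mem_support_iff.mp (Finset.mem_of_mem_erase hg)
          (ZeroMemClass.coe_eq_zero.mp hz)
      exact Ideal.subset_span (Set.mem_biUnion ⟨hmemQ g _ (SetLike.coe_mem _) hnz, hne⟩
        (SetLike.coe_mem _))
    have h2 : r - ((DirectSum.decompose 𝒜 r 0 : 𝒜 0) : R)
        = ∑ g ∈ (DirectSum.decompose 𝒜 r).support.erase 0,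
          ((DirectSum.decompose 𝒜 r g : 𝒜 g) : R) := by
      by_cases h0 : 0 ∈ (DirectSum.decompose 𝒜 r).support
      · rw [← Finset.add_sum_erase _ _ h0] at hsum
        exact (eq_sub_of_add_eq' hsum).symm
      · have hz : ((DirectSum.decompose 𝒜 r 0 : 𝒜 0) : R) = 0 := by
          rw [DFinsupp.notMem_support_iff.mp h0]
          rfl
        rw [hz, sub_zero, Finset.erase_eq_of_notMem h0]
        exact hsum.symm
    rw [h2]
    exact Submodule.sum_mem _ hmemI
  -- in the quotient, `R`-spans and `k`-spans agree
  have hIkill : ∀ r ∈ gradedIrrelevant 𝒜, ∀ z : M ⧸ IM, r • z = 0 := by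
    intro r hr z
    obtain ⟨m, rfl⟩ := Submodule.Quotient.mk_surjective IM z
    have h1 : (Submodule.Quotient.mk (r • m) : M ⧸ IM) = r • Submodule.Quotient.mk m :=
      Submodule.Quotient.mk_smul IM r m
    rw [← h1, Submodule.Quotient.mk_eq_zero]
    exact Submodule.smul_mem_smul hr Submodule.mem_top
  have hRk : ∀ (X : Set (M ⧸ IM)) (y : M ⧸ IM),
      y ∈ Submodule.span R X → y ∈ Submodule.span k X := by
    intro X y hy
    refine Submodule.span_induction (p := fun y _ => y ∈ Submodule.span k X) ?_ ?_ ?_ ?_ hy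
    · exact fun z hz => Submodule.subset_span hz
    · exact Submodule.zero_mem _
    · intro a b _ _ ha hb; exact Submodule.add_mem _ ha hb
    · intro r z _ hz
      have hc0 : ((DirectSum.decompose 𝒜 r 0 : 𝒜 0) : R) ∈ (1 : Submodule k R) := by
        rw [← hconn]; exact SetLike.coe_mem _
      obtain ⟨c, hc⟩ := Submodule.mem_one.mp hc0
      have hr' : r - algebraMap k R c ∈ gradedIrrelevant 𝒜 := by
        rw [hc]
        exact hdecompI r
      have hrz : r • z = c • z + (r - algebraMap k R c) • z := by
        rw [sub_smul, algebraMap_smul]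
        abel
      rw [hrz, hIkill _ hr' z, add_zero]
      exact Submodule.smul_mem _ c hz
  -- assemble everything
  refine ⟨s, d, fun m => ⟨hdne m, hdmem m⟩, hBDF, hspanTop, hLI, hresTop, ?_⟩
  -- minimality
  intro t hts hspant
  obtain ⟨x, hxs, hxt⟩ := Set.exists_of_ssubset hts
  have hxspan : x ∈ Submodule.span R t := hspant ▸ Submodule.mem_top
  have h1 : mkk x ∈ Submodule.span R (IM.mkQ '' t) := by
    have h2 := Submodule.mem_map_of_mem (f := IM.mkQ) hxspan
    rw [Submodule.map_span] at h2
    exact h2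
  have h3 : mkk x ∈ Submodule.span k (v '' {j : s | (j : M) ∈ t}) := by
    refine Submodule.span_mono ?_ (hRk _ _ h1)
    rintro _ ⟨m', hm', rfl⟩
    exact ⟨⟨m', hts.1 hm'⟩, hm', (Submodule.mkQ_apply IM m').symm⟩
  have h4 : (⟨x, hxs⟩ : s) ∉ {j : s | (j : M) ∈ t} := hxt
  exact hLI.notMem_span_image h4 h3
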